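/- Let $\mathfrak{g}=\mathfrak{h}_{2n+1}\times\mathbb{R}^{2k+1}$ with basis $\{e_1,\ldots,e_{2n},z_0,\ldots,z_{2k+1}\}$, nonzero brackets $[e_{2i-1},e_{2i}]=z_0$, and let $J_n$ be the abelian complex structure with $J_ne_{2i-1}=-e_{2i}$ for all $i$ and $J_nz_{2j}=-z_{2j+1}$. Then for every $J_n$-adapted basis $\{f_1,\ldots,f_{2n},z_0',\ldots,z_{2k+1}'\}$ adapted to the splitting, one has $[f_{2i-1},f_{2i}]=\mu_i z_0$ with $\mu_i>0$ for each $i$; consequently $\sum_i[J_nf_i,f_i]\neq 0$ and no $J_n$-Hermitian metric on $\mathfrak{g}$ is balanced. -/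

import Mathlib

/-- Let `𝔤 = 𝔥_{2n+1} × ℝ^{2k+1}` with basis `e₁, …, e_{2n}, z₀, …, z_{2k+1}` (nonzero
brackets `⁅e_{2i-1}, e_{2i}⁆ = z₀`; `e`'s indexed by `Fin n × Bool`, `z`'s by
`Fin (k+1) × Bool` with `z₀ ↦ (0, false)`), and let `J_n` be the abelian complex
structure with `J_n e_{2i-1} = -e_{2i}` for all `i` and `J_n z_{2j} = -z_{2j+1}`.
Then for every `J_n`-adapted basis `f₁, …, f_{2n}, z₀', …, z_{2k+1}'` adapted to the
splitting, each `⁅f_{2i-1}, f_{2i}⁆` is a positive multiple `μᵢ z₀` of `z₀`;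
consequently `∑ᵢ ⁅J_n fᵢ, fᵢ⁆ ≠ 0`, and no `J_n`-Hermitian metric on `𝔤` is balanced
(for every compatible inner product, every orthonormal basis `w` has
`∑ᵢ ⁅J_n wᵢ, wᵢ⁆ ≠ 0`). -/
theorem heisenberg_J0_not_balanced {L : Type*} [LieRing L] [LieAlgebra ℝ L]
    (n k : ℕ) (hn : 0 < n)
    (b : Module.Basis ((Fin n × Bool) ⊕ (Fin (k + 1) × Bool)) ℝ L)
    (hbr1 : ∀ i : Fin n, ⁅b (Sum.inl (i, false)), b (Sum.inl (i, true))⁆ =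
      b (Sum.inr (⟨0, Nat.succ_pos k⟩, false)))
    (hbr2 : ∀ i j : Fin n, i ≠ j → ∀ s t : Bool,
      ⁅b (Sum.inl (i, s)), b (Sum.inl (j, t))⁆ = 0)
    (hbr3 : ∀ p q, ⁅b (Sum.inl p), b (Sum.inr q)⁆ = 0)
    (hbr4 : ∀ q q', ⁅b (Sum.inr q), b (Sum.inr q')⁆ = 0)
    -- the abelian complex structure J_n
    (J : L →ₗ[ℝ] L) (hJ2 : ∀ x, J (J x) = -x)
    (hJe : ∀ i : Fin n, J (b (Sum.inl (i, false))) = -b (Sum.inl (i, true)))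
    (hJz : ∀ q : Fin (k + 1), J (b (Sum.inr (q, false))) = -b (Sum.inr (q, true))) :
    (∀ c : Module.Basis ((Fin n × Bool) ⊕ (Fin (k + 1) × Bool)) ℝ L,
      -- `c` is `J_n`-adapted …
      (∀ i : Fin n, J (c (Sum.inl (i, false))) = -c (Sum.inl (i, true))) →
      (∀ q : Fin (k + 1), J (c (Sum.inr (q, false))) = -c (Sum.inr (q, true))) →
      -- … and adapted to the splitting
      (∀ p, c (Sum.inl p) ∈
        Submodule.span ℝ (Set.range fun p' : Fin n × Bool => b (Sum.inl p'))) →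
      (∀ q, c (Sum.inr q) ∈
        Submodule.span ℝ (Set.range fun q' : Fin (k + 1) × Bool => b (Sum.inr q'))) →
      (∀ i : Fin n, ∃ μ : ℝ, 0 < μ ∧
        ⁅c (Sum.inl (i, false)), c (Sum.inl (i, true))⁆ =
          μ • b (Sum.inr (⟨0, Nat.succ_pos k⟩, false))) ∧
      ∑ p : (Fin n × Bool) ⊕ (Fin (k + 1) × Bool), ⁅J (c p), c p⁆ ≠ 0) ∧
    ∀ g : L →ₗ[ℝ] L →ₗ[ℝ] ℝ, (∀ x y, g x y = g y x) →
      (∀ x : L, x ≠ 0 → 0 < g x x) → (∀ x y, g (J x) (J y) = g x y) →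
      ∀ w : Module.Basis ((Fin n × Bool) ⊕ (Fin (k + 1) × Bool)) ℝ L,
        (∀ p q, g (w p) (w q) = if p = q then (1 : ℝ) else 0) →
        ∑ p : (Fin n × Bool) ⊕ (Fin (k + 1) × Bool), ⁅J (w p), w p⁆ ≠ 0 := by
  set z0 : L := b (Sum.inr (⟨0, Nat.succ_pos k⟩, false)) with hz0def
  -- J on the "true" basis vectors
  have hJe' : ∀ i : Fin n, J (b (Sum.inl (i, true))) = b (Sum.inl (i, false)) := by
    intro i
    have h := congrArg J (hJe i)
    rw [hJ2, map_neg] at h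
    exact (neg_inj.mp h).symm
  have hJz' : ∀ q : Fin (k + 1), J (b (Sum.inr (q, true))) = b (Sum.inr (q, false)) := by
    intro q
    have h := congrArg J (hJz q)
    rw [hJ2, map_neg] at h
    exact (neg_inj.mp h).symm
  -- sum lemmas for the bracket
  have lsum : ∀ (y : L) (f : ((Fin n × Bool) ⊕ (Fin (k + 1) × Bool)) → L),
      ⁅y, ∑ i, f i⁆ = ∑ i, ⁅y, f i⁆ := fun y f =>
    map_sum (AddMonoidHom.mk' (fun z => ⁅y, z⁆) (lie_add y)) f Finset.univ
  have suml : ∀ (y : L) (f : ((Fin n × Bool) ⊕ (Fin (k + 1) × Bool)) → L),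
      ⁅∑ i, f i, y⁆ = ∑ i, ⁅f i, y⁆ := fun y f =>
    map_sum (AddMonoidHom.mk' (fun z => ⁅z, y⁆) (fun a b' => add_lie a b' y)) f Finset.univ
  -- brackets of J-image of basis vectors with basis vectors
  set κ : ((Fin n × Bool) ⊕ (Fin (k + 1) × Bool)) → ((Fin n × Bool) ⊕ (Fin (k + 1) × Bool)) → ℝ :=
    fun i j => Sum.elim (fun p => if j = Sum.inl p then 1 else 0) (fun _ => 0) i with hκdef
  have hJb : ∀ i j, ⁅J (b i), b j⁆ = κ i j • z0 := by
    rintro (⟨m, s⟩ | ⟨q, s⟩) j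
    · cases s
      · rw [hJe m, neg_lie]
        rcases j with ⟨m', t⟩ | q'
        · by_cases hm : m' = m
          · subst hm
            cases t
            · have h : ⁅b (Sum.inl (m', true)), b (Sum.inl (m', false))⁆ = -z0 := by
                rw [← lie_skew, hbr1 m']
              rw [h]
              simp [hκdef]
            · simp [hκdef, lie_self]
          · rw [hbr2 m m' (fun h => hm h.symm) true t]
            simp [hκdef, hm]
        · rw [hbr3]
          simp [hκdef]
      · rw [hJe' m]
        rcases j with ⟨m', t⟩ | q'
        · by_cases hm : m' = m
          · subst hm
            cases t
            · simp [hκdef, lie_self]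
            · rw [hbr1 m']
              simp [hκdef]
          · rw [hbr2 m m' (fun h => hm h.symm) false t]
            simp [hκdef, hm]
        · rw [hbr3]
          simp [hκdef]
    · rcases j with p' | q'
      · have h3 : ∀ t : Bool, ⁅b (Sum.inr (q, t)), b (Sum.inl p')⁆ = 0 := by
          intro t; rw [← lie_skew, hbr3, neg_zero]
        cases s
        · rw [hJz q, neg_lie, h3, neg_zero]; simp [hκdef]
        · rw [hJz' q, h3]; simp [hκdef]
      · cases s
        · rw [hJz q, neg_lie, hbr4, neg_zero]; simp [hκdef]
        · rw [hJz' q, hbr4]; simp [hκdef]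
  -- the key formula
  have key : ∀ x y : L, ⁅J x, y⁆ =
      (∑ p : Fin n × Bool, b.repr x (Sum.inl p) * b.repr y (Sum.inl p)) • z0 := by
    intro x y
    calc ⁅J x, y⁆
        = ∑ i, ∑ j, (b.repr x i * b.repr y j * κ i j) • z0 := by
          conv_lhs => rw [← b.sum_repr x, ← b.sum_repr y]
          rw [map_sum, suml]
          refine Finset.sum_congr rfl fun i _ => ?_
          rw [map_smul, smul_lie, lsum, Finset.smul_sum]
          refine Finset.sum_congr rfl fun j _ => ?_
          rw [lie_smul, hJb, smul_smul, smul_smul, mul_assoc]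
      _ = (∑ i, ∑ j, b.repr x i * b.repr y j * κ i j) • z0 := by
          rw [Finset.sum_smul]
          exact Finset.sum_congr rfl fun i _ => by rw [Finset.sum_smul]
      _ = (∑ p : Fin n × Bool, b.repr x (Sum.inl p) * b.repr y (Sum.inl p)) • z0 := by
          congr 1
          rw [Fintype.sum_sum_type]
          simp [hκdef, mul_ite, mul_one, mul_zero, Finset.sum_ite_eq']
  -- the crucial nonvanishing statement, for ANY basis
  have main : ∀ c : Module.Basis ((Fin n × Bool) ⊕ (Fin (k + 1) × Bool)) ℝ L,
      ∑ p : (Fin n × Bool) ⊕ (Fin (k + 1) × Bool), ⁅J (c p), c p⁆ ≠ 0 := by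
    intro c hc
    simp only [key] at hc
    rw [← Finset.sum_smul] at hc
    rcases smul_eq_zero.mp hc with h | h
    · have h1 : ∀ p ∈ (Finset.univ : Finset ((Fin n × Bool) ⊕ (Fin (k + 1) × Bool))),
          (0:ℝ) ≤ ∑ q : Fin n × Bool, b.repr (c p) (Sum.inl q) * b.repr (c p) (Sum.inl q) :=
        fun p _ => Finset.sum_nonneg fun q _ => mul_self_nonneg _
      have hall : ∀ p q, b.repr (c p) (Sum.inl q) = 0 := by
        intro p q
        have h2 := (Finset.sum_eq_zero_iff_of_nonneg h1).mp h p (Finset.mem_univ _)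
        have h3 := (Finset.sum_eq_zero_iff_of_nonneg
          (fun q _ => mul_self_nonneg _)).mp h2 q (Finset.mem_univ _)
        exact mul_self_eq_zero.mp h3
      have he : b (Sum.inl ((⟨0, hn⟩ : Fin n), false))
          = ∑ p, c.repr (b (Sum.inl ((⟨0, hn⟩ : Fin n), false))) p • c p :=
        (c.sum_repr _).symm
      have h1' : b.repr (b (Sum.inl ((⟨0, hn⟩ : Fin n), false)))
          (Sum.inl ((⟨0, hn⟩ : Fin n), false)) = 1 := by simp
      rw [he, map_sum] at h1'
      simp only [map_smul, Finset.sum_apply', Finsupp.smul_apply, hall, smul_zero,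
        Finset.sum_const_zero] at h1'
      exact one_ne_zero h1'.symm
    · exact b.ne_zero _ h
  -- coordinates in the z-block vanish on the e-span
  have espan : ∀ x, x ∈ Submodule.span ℝ (Set.range fun p' : Fin n × Bool => b (Sum.inl p')) →
      ∀ q, b.repr x (Sum.inr q) = 0 := by
    intro x hx
    induction hx using Submodule.span_induction with
    | mem x hx =>
        rcases hx with ⟨p, rfl⟩
        intro q
        simp [Finsupp.single_apply]
    | zero => simp
    | add x y _ _ hx hy => intro q; simp [hx q, hy q]
    | smul a x _ hx => intro q; simp [hx q]
  refine ⟨fun c hcJe hcJz hce hcz => ⟨fun i => ?_, main c⟩,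
    fun g _ _ _ w _ => main w⟩
  have hct : c (Sum.inl (i, true)) = -J (c (Sum.inl (i, false))) := by
    rw [hcJe i, neg_neg]
  refine ⟨∑ p : Fin n × Bool,
    b.repr (c (Sum.inl (i, false))) (Sum.inl p) * b.repr (c (Sum.inl (i, false))) (Sum.inl p),
    ?_, ?_⟩
  · have hnonneg : (0:ℝ) ≤ ∑ p : Fin n × Bool,
        b.repr (c (Sum.inl (i, false))) (Sum.inl p) * b.repr (c (Sum.inl (i, false))) (Sum.inl p) :=
      Finset.sum_nonneg fun q _ => mul_self_nonneg _
    rcases hnonneg.lt_or_eq with hlt | heq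
    · exact hlt
    · exfalso
      have hall : ∀ q, b.repr (c (Sum.inl (i, false))) (Sum.inl q) = 0 := by
        intro q
        have h3 := (Finset.sum_eq_zero_iff_of_nonneg
          (fun q _ => mul_self_nonneg _)).mp heq.symm q (Finset.mem_univ _)
        exact mul_self_eq_zero.mp h3
      have hzero : b.repr (c (Sum.inl (i, false))) = 0 := by
        ext j
        rcases j with p | q
        · exact hall p
        · exact espan _ (hce _) q
      exact c.ne_zero (Sum.inl (i, false)) (b.repr.map_eq_zero_iff.mp hzero)
  · rw [hct, lie_neg, lie_skew]
    exact key _ _
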